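/- Let H be the set of free components of h(x,K) and suppose every i ∈ H lies in K. For configurations y, there is an MP transition x →_MP y witnessed by K if and only if L ⊆ Δ(x,y) ⊆ H, where L = {i ∈ H | ∀y ∈ c(h(x,K)), f_i(y) ≠ x_i}. -/
import Mathlib


/-- Vertex set of a sub-hypercube `h ∈ {0,1,*}^n`, encoded as `Fin n → Option Bool`
(`none` = free component `*`). -/
def verts {n : ℕ} (h : Fin n → Option Bool) : Set (Fin n → Bool) :=
  {x | ∀ i b, h i = some b → x i = b}

/-- `h` is `K`-closed by the Boolean network `f`. -/
def KClosed {n : ℕ} (f : (Fin n → Bool) → Fin n → Bool) (K : Set (Fin n))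
    (h : Fin n → Option Bool) : Prop :=
  ∀ x ∈ verts h, ∀ i ∈ K, ∀ b, h i = some b → f x i = b

/-- `h` is the smallest `K`-closed sub-hypercube containing `x`. -/
def SmallestClosed {n : ℕ} (f : (Fin n → Bool) → Fin n → Bool) (K : Set (Fin n))
    (x : Fin n → Bool) (h : Fin n → Option Bool) : Prop :=
  KClosed f K h ∧ x ∈ verts h ∧
    ∀ h', KClosed f K h' → x ∈ verts h' → verts h ⊆ verts h'

/-- Most Permissive transition `x →_MP y`. -/
def MPTrans {n : ℕ} (f : (Fin n → Bool) → Fin n → Bool) (x y : Fin n → Bool) : Prop :=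
  ∃ (K : Set (Fin n)) (h : Fin n → Option Bool), SmallestClosed f K x h ∧
    y ∈ verts h ∧ ∀ i ∈ K, ∃ z ∈ verts h, y i = f z i

/-- With `H` the free components of `h(x,K)` (all assumed to lie in `K`) and
`L = {i ∈ H | ∀ y ∈ c(h(x,K)), f_i(y) ≠ x_i}`, the transition `x →_MP y` is
witnessed by `K` iff `L ⊆ Δ(x,y) ⊆ H`. -/
theorem stmt_15 {n : ℕ} (f : (Fin n → Bool) → Fin n → Bool) (K : Set (Fin n))
    (x : Fin n → Bool) (h : Fin n → Option Bool) (hs : SmallestClosed f K x h)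
    (hfree : ∀ i, h i = none → i ∈ K) (y : Fin n → Bool) :
    (y ∈ verts h ∧ ∀ i ∈ K, ∃ z ∈ verts h, y i = f z i) ↔
    (({i | h i = none ∧ ∀ z ∈ verts h, f z i ≠ x i} ⊆ {i | x i ≠ y i}) ∧
     ({i | x i ≠ y i} ⊆ {i | h i = none})) := by
  obtain ⟨hcl, hx, hmin⟩ := hs
  -- minimality: every free coordinate can be flipped by f somewhere in verts h
  have key : ∀ i, h i = none → ∃ z ∈ verts h, f z i ≠ x i := by
    intro i hi
    by_contra hcon
    push_neg at hcon
    have hcon' : ∀ z ∈ verts h, f z i = x i := by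
      intro z hz; simpa using hcon z hz
    set h' : Fin n → Option Bool := Function.update h i (some (x i)) with hh'
    have hsub : verts h' ⊆ verts h := by
      intro z hz j b hjb
      by_cases hji : j = i
      · subst hji; rw [hi] at hjb; exact absurd hjb (by simp)
      · exact hz j b (by simpa [hh', Function.update_of_ne hji] using hjb)
    have hcl' : KClosed f K h' := by
      intro z hz j hjK b hjb
      by_cases hji : j = i
      · subst hji
        have hbx : x j = b := by simpa [hh'] using hjb
        rw [← hbx]
        exact hcon' z (hsub hz)
      · exact hcl z (hsub hz) j hjK b (by simpa [hh', Function.update_of_ne hji] using hjb)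
    have hx' : x ∈ verts h' := by
      intro j b hjb
      by_cases hji : j = i
      · subst hji; simpa [hh'] using hjb
      · exact hx j b (by simpa [hh', Function.update_of_ne hji] using hjb)
    have hss := hmin h' hcl' hx'
    set z : Fin n → Bool := Function.update x i (!x i) with hz
    have hzv : z ∈ verts h := by
      intro j b hjb
      have hji : j ≠ i := by rintro rfl; rw [hi] at hjb; exact absurd hjb (by simp)
      simpa [hz, Function.update_of_ne hji] using hx j b hjb
    have := hss hzv i (x i) (by simp [hh'])
    simp [hz] at this
  constructor
  · rintro ⟨hy, hK⟩
    constructor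
    · rintro i ⟨hi, hall⟩
      obtain ⟨z, hzv, hzy⟩ := hK i (hfree i hi)
      have := hall z hzv
      simp only [Set.mem_setOf_eq]
      rw [hzy]; exact fun e => this e.symm
    · intro i hi
      simp only [Set.mem_setOf_eq] at hi ⊢
      cases hb : h i with
      | none => rfl
      | some b => exact absurd ((hx i b hb).trans (hy i b hb).symm) hi
  · rintro ⟨hL, hH⟩
    have hy : y ∈ verts h := by
      intro i b hib
      have : x i = y i := by
        by_contra hne
        have := hH hne
        rw [Set.mem_setOf_eq, hib] at this; exact absurd this (by simp)
      rw [← this]; exact hx i b hib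
    refine ⟨hy, fun i hiK => ?_⟩
    cases hb : h i with
    | some b =>
      refine ⟨x, hx, ?_⟩
      rw [hy i b hb, hcl x hx i hiK b hb]
    | none =>
      by_cases hxy : x i = y i
      · -- i ∉ Δ, so i ∉ L: some z with f z i = x i
        have : i ∉ {i | h i = none ∧ ∀ z ∈ verts h, f z i ≠ x i} := fun hmem => hL hmem hxy
        simp only [Set.mem_setOf_eq, hb, true_and, not_forall] at this
        obtain ⟨z, hzv, hzi⟩ := this
        simp only [not_not, not_exists] at hzi
        obtain ⟨hzv', hzi'⟩ : z ∈ verts h ∧ f z i = x i := by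
          tauto
        exact ⟨z, hzv', by rw [← hxy, hzi']⟩
      · obtain ⟨z, hzv, hzi⟩ := key i hb
        refine ⟨z, hzv, ?_⟩
        cases hxi : x i <;> cases hyi : y i <;> simp_all
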